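/- Let X be an infinite dimensional Banach space, let Y = c₀(X) with its standard Schauder decomposition, and let A = (a_{m,n}) be a scalar matrix with all but finitely many entries zero. Define the operator on Y by Â((x_n)_n) = (Σ_n a_{m,n} x_n)_m. Then for every compact operator K : Y → Y, ‖Â − K‖ ≥ ‖A‖_{L(c₀)}. In particular the distance of from K(Y) equals ‖A‖_{L(c₀)}. -/
import Mathlib


open Filter Topology ZeroAtInfty

/-- Let `X` be an infinite dimensional Banach space, `Y = c₀(X)`, and let
`A = (a_{m,n})` be a finitely supported scalar matrix, with associated operator
`Â((x_n)_n) = (Σ_n a_{m,n} x_n)_m` on `Y`. Then for every compact operator `K : Y → Y`,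
`‖Â − K‖ ≥ ‖A‖_{L(c₀)} = sup_m Σ_n |a_{m,n}|`; in particular the distance of `Â` from
`K(Y)` equals `‖A‖_{L(c₀)}`. -/
theorem stmt6 (X : Type*) [NormedAddCommGroup X] [NormedSpace ℂ X] [CompleteSpace X]
    (hinf : ¬ FiniteDimensional ℂ X)
    (A : ℕ → ℕ → ℂ) (hA : {p : ℕ × ℕ | A p.1 p.2 ≠ 0}.Finite)
    (Ahat : C₀(ℕ, X) →L[ℂ] C₀(ℕ, X))
    (hAhat : ∀ (x : C₀(ℕ, X)) (m : ℕ), Ahat x m = ∑' n, A m n • x n) :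
    (∀ K : C₀(ℕ, X) →L[ℂ] C₀(ℕ, X), IsCompactOperator ⇑K →
        (⨆ m, ∑' n, ‖A m n‖) ≤ ‖Ahat - K‖) ∧
      sInf {r : ℝ | ∃ K : C₀(ℕ, X) →L[ℂ] C₀(ℕ, X),
          IsCompactOperator ⇑K ∧ r = ‖Ahat - K‖} = ⨆ m, ∑' n, ‖A m n‖ := by
  classical
  set g : ℕ → ℝ := fun m => ∑' n, ‖A m n‖ with hgdef
  set T : Finset (ℕ × ℕ) := hA.toFinset with hT
  set N : Finset ℕ := T.image Prod.snd with hNdef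
  have hN : ∀ m n, n ∉ N → A m n = 0 := by
    intro m n hn
    by_contra h
    exact hn (Finset.mem_image.2 ⟨(m, n), hA.mem_toFinset.2 h, rfl⟩)
  have hgsum : ∀ m, g m = ∑ n ∈ N, ‖A m n‖ := by
    intro m
    exact tsum_eq_sum fun n hn => by rw [hN m n hn, norm_zero]
  have hgnn : ∀ m, 0 ≤ g m := by
    intro m; rw [hgsum]; exact Finset.sum_nonneg fun n _ => norm_nonneg _
  have hAx : ∀ (x : C₀(ℕ, X)) (m : ℕ), Ahat x m = ∑ n ∈ N, A m n • x n := by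
    intro x m
    rw [hAhat]
    exact tsum_eq_sum fun n hn => by rw [hN m n hn, zero_smul]
  -- maximizing row
  obtain ⟨m₀, hm₀M, hm₀⟩ := Finset.exists_max_image (insert 0 (T.image Prod.fst)) g
    ⟨0, Finset.mem_insert_self _ _⟩
  have hmax : ∀ m, g m ≤ g m₀ := by
    intro m
    by_cases hm : m ∈ insert 0 (T.image Prod.fst)
    · exact hm₀ m hm
    · have hz : g m = 0 := by
        rw [hgsum]
        refine Finset.sum_eq_zero fun n _ => ?_
        by_contra h
        have : A m n ≠ 0 := fun h0 => h (by rw [h0, norm_zero])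
        exact hm (Finset.mem_insert_of_mem
          (Finset.mem_image.2 ⟨(m, n), hA.mem_toFinset.2 this, rfl⟩))
      rw [hz]; exact hgnn m₀
  have hbdd : BddAbove (Set.range g) := ⟨g m₀, by rintro _ ⟨m, rfl⟩; exact hmax m⟩
  have hsup : (⨆ m, g m) = g m₀ :=
    le_antisymm (ciSup_le hmax) (le_ciSup hbdd m₀)
  set s : ℝ := g m₀ with hsdef
  have hs0 : 0 ≤ s := hgnn m₀
  -- signs
  set σ : ℕ → ℂ := fun n => if A m₀ n = 0 then 0
    else (starRingEnd ℂ) (A m₀ n) / (‖A m₀ n‖ : ℂ) with hσdef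
  have hσ1 : ∀ n, ‖σ n‖ ≤ 1 := by
    intro n
    by_cases h : A m₀ n = 0
    · simp [hσdef, h]
    · have hn0 : ‖A m₀ n‖ ≠ 0 := norm_ne_zero_iff.2 h
      simp only [hσdef, if_neg h, norm_div, RCLike.norm_conj, Complex.norm_real,
        Real.norm_eq_abs, abs_of_nonneg (norm_nonneg _)]
      rw [div_self hn0]
  have hσ2 : ∀ n, A m₀ n * σ n = (‖A m₀ n‖ : ℂ) := by
    intro n
    by_cases h : A m₀ n = 0
    · simp [hσdef, h]
    · have hn0 : (‖A m₀ n‖ : ℂ) ≠ 0 := by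
        exact_mod_cast Complex.ofReal_ne_zero.2 (norm_ne_zero_iff.2 h)
      rw [hσdef]
      simp only [if_neg h]
      rw [mul_div_assoc', Complex.mul_conj']
      rw [div_eq_iff hn0]
      norm_cast
      ring
  have hσ0 : ∀ n, n ∉ N → σ n = 0 := by
    intro n hn; rw [hσdef]; simp [hN m₀ n hn]
  -- the rank-one-like embedding
  have hvzero : ∀ u : X, Tendsto (fun n => σ n • u) (cocompact ℕ) (𝓝 0) := by
    intro u
    have hev : ∀ᶠ n in cocompact ℕ, (fun _ => (0 : X)) n = σ n • u := by
      rw [cocompact_eq_cofinite, eventually_cofinite]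
      apply Set.Finite.subset N.finite_toSet
      intro n hn
      by_contra h
      exact hn (by simp [hσ0 n h])
    exact Filter.Tendsto.congr' hev tendsto_const_nhds
  set v : X → C₀(ℕ, X) := fun u =>
    ⟨⟨fun n => σ n • u, continuous_of_discreteTopology⟩, hvzero u⟩ with hvdef
  have hv_apply : ∀ (u : X) (n : ℕ), v u n = σ n • u := fun _ _ => rfl
  have hv_sub : ∀ u w : X, v u - v w = v (u - w) := by
    intro u w
    ext n
    simp [hv_apply, smul_sub]
  have hv_norm : ∀ u : X, ‖v u‖ ≤ ‖u‖ := by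
    intro u
    rw [← ZeroAtInftyContinuousMap.norm_toBCF_eq_norm]
    refine (BoundedContinuousFunction.norm_le (norm_nonneg u)).2 fun n => ?_
    calc ‖σ n • u‖ = ‖σ n‖ * ‖u‖ := norm_smul _ _
      _ ≤ 1 * ‖u‖ := mul_le_mul_of_nonneg_right (hσ1 n) (norm_nonneg u)
      _ = ‖u‖ := one_mul _
  have hv_eval : ∀ u : X, Ahat (v u) m₀ = (s : ℂ) • u := by
    intro u
    rw [hAx]
    have : ∀ n ∈ N, A m₀ n • v u n = ((‖A m₀ n‖ : ℂ)) • u := by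
      intro n _
      rw [hv_apply, smul_smul, hσ2 n]
    rw [Finset.sum_congr rfl this, ← Finset.sum_smul]
    congr 1
    rw [hsdef, hgsum]
    push_cast
    ring
  have hv_lower : ∀ u : X, s * ‖u‖ ≤ ‖Ahat (v u)‖ := by
    intro u
    have h1 : ‖Ahat (v u) m₀‖ ≤ ‖Ahat (v u)‖ := by
      rw [← ZeroAtInftyContinuousMap.norm_toBCF_eq_norm]
      exact BoundedContinuousFunction.norm_coe_le_norm (Ahat (v u)).toBCF m₀
    calc s * ‖u‖ = ‖(s : ℂ)‖ * ‖u‖ := by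
          rw [Complex.norm_real, Real.norm_eq_abs, abs_of_nonneg hs0]
      _ = ‖(s : ℂ) • u‖ := (norm_smul _ _).symm
      _ = ‖Ahat (v u) m₀‖ := by rw [hv_eval]
      _ ≤ ‖Ahat (v u)‖ := h1
  -- upper bound for ‖Ahat‖
  have hAhat_norm : ‖Ahat‖ ≤ s := by
    refine ContinuousLinearMap.opNorm_le_bound _ hs0 fun x => ?_
    rw [← ZeroAtInftyContinuousMap.norm_toBCF_eq_norm]
    refine (BoundedContinuousFunction.norm_le (mul_nonneg hs0 (norm_nonneg x))).2 fun m => ?_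
    have hxb : ∀ n, ‖x n‖ ≤ ‖x‖ := by
      intro n
      rw [← ZeroAtInftyContinuousMap.norm_toBCF_eq_norm]
      exact BoundedContinuousFunction.norm_coe_le_norm x.toBCF n
    calc ‖(Ahat x).toBCF m‖ = ‖∑ n ∈ N, A m n • x n‖ := by
          rw [show (Ahat x).toBCF m = Ahat x m from rfl, hAx]
      _ ≤ ∑ n ∈ N, ‖A m n • x n‖ := norm_sum_le _ _
      _ ≤ ∑ n ∈ N, ‖A m n‖ * ‖x‖ := by
          refine Finset.sum_le_sum fun n _ => ?_
          rw [norm_smul]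
          exact mul_le_mul_of_nonneg_left (hxb n) (norm_nonneg _)
      _ = g m * ‖x‖ := by rw [← Finset.sum_mul, ← hgsum]
      _ ≤ s * ‖x‖ := mul_le_mul_of_nonneg_right (hmax m) (norm_nonneg x)
  -- main lower bound
  have lower : ∀ K : C₀(ℕ, X) →L[ℂ] C₀(ℕ, X), IsCompactOperator ⇑K → s ≤ ‖Ahat - K‖ := by
    intro K hK
    obtain ⟨R, u, hR1, huR, hu⟩ := exists_seq_norm_le_one_le_norm_sub (𝕜 := ℂ) hinf
    have hbd : Bornology.IsBounded (Set.range fun k => v (u k)) := by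
      refine isBounded_iff_forall_norm_le.2 ⟨R, ?_⟩
      rintro _ ⟨k, rfl⟩
      exact (hv_norm (u k)).trans (huR k)
    have hK' : IsCompactOperator ⇑(K : C₀(ℕ, X) →ₗ[ℂ] C₀(ℕ, X)) := by
      simpa using hK
    obtain ⟨C, hC, himg⟩ := hK'.image_subset_compact_of_bounded hbd
    have hmem : ∀ k, K (v (u k)) ∈ C := fun k => himg ⟨v (u k), ⟨k, rfl⟩, rfl⟩
    refine le_of_forall_pos_le_add fun ε hε => ?_
    obtain ⟨x, -, φ, hφ, hconv⟩ := hC.tendsto_subseq hmem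
    have hev := hconv.eventually (Metric.ball_mem_nhds x (half_pos hε))
    obtain ⟨i₀, hi₀⟩ := eventually_atTop.1 hev
    set p := φ i₀ with hp
    set q := φ (i₀ + 1) with hq
    have hpq : p ≠ q := fun h => by
      have := hφ.injective h
      omega
    have hKclose : ‖K (v (u p)) - K (v (u q))‖ ≤ ε := by
      have h1 := hi₀ i₀ le_rfl
      have h2 := hi₀ (i₀ + 1) (Nat.le_succ _)
      simp only [Function.comp_apply] at h1 h2
      rw [← dist_eq_norm]
      rw [dist_comm] at h2
      calc dist (K (v (u p))) (K (v (u q)))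
          ≤ dist (K (v (u p))) x + dist x (K (v (u q))) := dist_triangle _ _ _
        _ ≤ ε / 2 + ε / 2 := add_le_add h1.le h2.le
        _ = ε := add_halves ε
    set d := ‖u p - u q‖ with hd
    have hd1 : 1 ≤ d := hu hpq
    have hmain : s * d ≤ ‖Ahat - K‖ * d + ε := by
      have h1 : s * d ≤ ‖Ahat (v (u p - u q))‖ := hv_lower _
      have h2 : Ahat (v (u p - u q)) = Ahat (v (u p)) - Ahat (v (u q)) := by
        rw [← hv_sub, map_sub]
      have h3 : ‖Ahat (v (u p)) - Ahat (v (u q))‖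
          ≤ ‖(Ahat - K) (v (u p)) - (Ahat - K) (v (u q))‖
            + ‖K (v (u p)) - K (v (u q))‖ := by
        have : Ahat (v (u p)) - Ahat (v (u q))
            = ((Ahat - K) (v (u p)) - (Ahat - K) (v (u q)))
              + (K (v (u p)) - K (v (u q))) := by
          simp only [ContinuousLinearMap.sub_apply]
          abel
        rw [this]
        exact norm_add_le _ _
      have h4 : ‖(Ahat - K) (v (u p)) - (Ahat - K) (v (u q))‖ ≤ ‖Ahat - K‖ * d := by
        calc ‖(Ahat - K) (v (u p)) - (Ahat - K) (v (u q))‖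
            = ‖(Ahat - K) (v (u p) - v (u q))‖ := by rw [map_sub]
          _ ≤ ‖Ahat - K‖ * ‖v (u p) - v (u q)‖ := ContinuousLinearMap.le_opNorm _ _
          _ ≤ ‖Ahat - K‖ * d := by
              refine mul_le_mul_of_nonneg_left ?_ (ContinuousLinearMap.opNorm_nonneg _)
              rw [hv_sub]
              exact hv_norm _
      calc s * d ≤ ‖Ahat (v (u p - u q))‖ := h1
        _ = ‖Ahat (v (u p)) - Ahat (v (u q))‖ := by rw [h2]
        _ ≤ ‖(Ahat - K) (v (u p)) - (Ahat - K) (v (u q))‖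
            + ‖K (v (u p)) - K (v (u q))‖ := h3
        _ ≤ ‖Ahat - K‖ * d + ε := add_le_add h4 hKclose
    nlinarith [norm_nonneg (Ahat - K), hε.le, hd1, hmain]
  constructor
  · intro K hK
    rw [show (⨆ m, ∑' n, ‖A m n‖) = s from hsup]
    exact lower K hK
  · rw [show (⨆ m, ∑' n, ‖A m n‖) = s from hsup]
    have hzero_mem : ‖Ahat - 0‖ ∈ {r : ℝ | ∃ K : C₀(ℕ, X) →L[ℂ] C₀(ℕ, X),
        IsCompactOperator ⇑K ∧ r = ‖Ahat - K‖} := by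
      refine ⟨0, ?_, rfl⟩
      simpa using (isCompactOperator_zero (M₁ := C₀(ℕ, X)) (M₂ := C₀(ℕ, X)))
    have hlb : ∀ r ∈ {r : ℝ | ∃ K : C₀(ℕ, X) →L[ℂ] C₀(ℕ, X),
        IsCompactOperator ⇑K ∧ r = ‖Ahat - K‖}, s ≤ r := by
      rintro r ⟨K, hK, rfl⟩
      exact lower K hK
    refine le_antisymm ?_ (le_csInf ⟨_, hzero_mem⟩ hlb)
    calc sInf _ ≤ ‖Ahat - 0‖ := csInf_le ⟨s, hlb⟩ hzero_mem
      _ = ‖Ahat‖ := by rw [sub_zero]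
      _ ≤ s := hAhat_norm
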